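/- For every natural number S, all real numbers a > 0, b > 0 and every r ≥ 0, ∫₀^∞ (2πt)^{−S/2} · exp(−r/(2t)) · (b^a/Γ(a)) · t^{−(a+1)} · exp(−b/t) dt = (Γ(a + S/2)/Γ(a)) · (2π)^{−S/2} · b^a · (b + r/2)^{−(a + S/2)}. -/
import Mathlib

open Real MeasureTheory in
/-- Inverse-gamma type integral: `∫₀^∞ t^{-(s+1)} exp(-c/t) dt = c^{-s} Γ(s)`. -/
lemma inv_gamma_integral {s c : ℝ} (hs : 0 < s) (hc : 0 < c) :
    ∫ t in Set.Ioi (0 : ℝ), t ^ (-(s + 1)) * Real.exp (-(c / t)) =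
      c ^ (-s) * Real.Gamma s := by
  have h := MeasureTheory.integral_comp_rpow_Ioi
    (fun u => u ^ (s - 1) * Real.exp (-(c * u))) (p := -1) (by norm_num)
  rw [Real.integral_rpow_mul_exp_neg_mul_Ioi hs hc] at h
  have heq : ∀ x ∈ Set.Ioi (0 : ℝ),
      (|(-1 : ℝ)| * x ^ ((-1 : ℝ) - 1)) •
        ((fun u => u ^ (s - 1) * Real.exp (-(c * u))) (x ^ (-1 : ℝ)))
        = x ^ (-(s + 1)) * Real.exp (-(c / x)) := by
    intro x hx
    have hx0 : (0 : ℝ) < x := hx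
    simp only [abs_neg, abs_one, one_mul, smul_eq_mul]
    have e1 : (x ^ (-1 : ℝ)) ^ (s - 1) = x ^ (-(s - 1)) := by
      rw [← Real.rpow_mul hx0.le]; congr 1; ring
    have e2 : x ^ ((-1 : ℝ) - 1) * x ^ (-(s - 1)) = x ^ (-(s + 1)) := by
      rw [← Real.rpow_add hx0]; congr 1; ring
    have e3 : c * x ^ (-1 : ℝ) = c / x := by
      rw [Real.rpow_neg_one, div_eq_mul_inv]
    rw [e1, e3, ← mul_assoc, e2]
  rw [← setIntegral_congr_fun measurableSet_Ioi heq, h, one_div,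
    Real.inv_rpow hc.le, ← Real.rpow_neg hc.le]

open Real MeasureTheory in
/-- For every natural number `S`, reals `a > 0`, `b > 0` and `r ≥ 0`,
`∫₀^∞ (2πt)^{−S/2} · exp(−r/(2t)) · (b^a/Γ(a)) · t^{−(a+1)} · exp(−b/t) dt
  = (Γ(a + S/2)/Γ(a)) · (2π)^{−S/2} · b^a · (b + r/2)^{−(a + S/2)}`,
the marginal-prior computation in the two-block hierarchical model. -/
theorem marginal_prior_integral (S : ℕ) (a b r : ℝ)
    (ha : 0 < a) (hb : 0 < b) (hr : 0 ≤ r) :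
    ∫ t in Set.Ioi (0 : ℝ),
        (2 * π * t) ^ (-(S : ℝ) / 2) * Real.exp (-r / (2 * t)) *
          (b ^ a / Real.Gamma a) * t ^ (-(a + 1)) * Real.exp (-b / t) =
      (Real.Gamma (a + S / 2) / Real.Gamma a) * (2 * π) ^ (-(S : ℝ) / 2) *
        b ^ a * (b + r / 2) ^ (-(a + S / 2)) := by
  set s : ℝ := a + S / 2 with hsdef
  set c : ℝ := b + r / 2 with hcdef
  have hs : 0 < s := by positivity
  have hc : 0 < c := by positivity
  have heq : ∀ t ∈ Set.Ioi (0 : ℝ),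
      (2 * π * t) ^ (-(S : ℝ) / 2) * Real.exp (-r / (2 * t)) *
          (b ^ a / Real.Gamma a) * t ^ (-(a + 1)) * Real.exp (-b / t)
        = ((2 * π) ^ (-(S : ℝ) / 2) * (b ^ a / Real.Gamma a)) *
            (t ^ (-(s + 1)) * Real.exp (-(c / t))) := by
    intro t ht
    have ht0 : (0 : ℝ) < t := ht
    have h1 : (2 * π * t) ^ (-(S : ℝ) / 2)
        = (2 * π) ^ (-(S : ℝ) / 2) * t ^ (-(S : ℝ) / 2) :=
      Real.mul_rpow (by positivity) ht0.le
    have h2 : t ^ (-(S : ℝ) / 2) * t ^ (-(a + 1)) = t ^ (-(s + 1)) := by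
      rw [← Real.rpow_add ht0]
      congr 1
      rw [hsdef]; ring
    have h3 : Real.exp (-r / (2 * t)) * Real.exp (-b / t) = Real.exp (-(c / t)) := by
      rw [← Real.exp_add]
      congr 1
      rw [hcdef]
      field_simp
      ring
    calc (2 * π * t) ^ (-(S : ℝ) / 2) * Real.exp (-r / (2 * t)) *
          (b ^ a / Real.Gamma a) * t ^ (-(a + 1)) * Real.exp (-b / t)
        = ((2 * π) ^ (-(S : ℝ) / 2) * (b ^ a / Real.Gamma a)) *
            ((t ^ (-(S : ℝ) / 2) * t ^ (-(a + 1))) *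
              (Real.exp (-r / (2 * t)) * Real.exp (-b / t))) := by rw [h1]; ring
      _ = _ := by rw [h2, h3]
  rw [setIntegral_congr_fun measurableSet_Ioi heq, integral_const_mul,
    inv_gamma_integral hs hc]
  rw [hsdef]
  ring
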